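/- Let M be a complex n×n matrix with singular values m_1 ≤ … ≤ m_n, and let N be any p×q submatrix of M (p ≤ q ≤ n) with singular values σ_1 ≤ … ≤ σ_p. Then each singular value of the submatrix is bounded by the corresponding singular value of M: σ_i ≤ m_{n-p+i} for all i = 1, …, p. -/

import Mathlib

open Matrix

open Polynomial in
/-- `m` is the (increasingly ordered) tuple of singular values of the square matrix `M`. -/
def IsSingularValues {n : ℕ} (M : Matrix (Fin n) (Fin n) ℂ) (m : Fin n → ℝ) : Prop :=
  (∀ i, 0 ≤ m i) ∧ Monotone m ∧
    (Mᴴ * M).charpoly = ∏ i : Fin n, (X - C ((m i : ℂ) ^ 2))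

open Polynomial in
/-- `σ` is the (increasingly ordered) tuple of singular values of the rectangular
`p × q` matrix `N` (with `p ≤ q`), i.e. the nonnegative square roots of the
eigenvalues of `N * Nᴴ`. -/
def IsSingularValuesRect {p q : ℕ} (N : Matrix (Fin p) (Fin q) ℂ) (σ : Fin p → ℝ) : Prop :=
  (∀ i, 0 ≤ σ i) ∧ Monotone σ ∧
    (N * Nᴴ).charpoly = ∏ i : Fin p, (X - C ((σ i : ℂ) ^ 2))

namespace SVIAux

open Polynomial

variable {k : ℕ}

lemma conj_mul_re (z : ℂ) : ((starRingEnd ℂ) z * z).re = ‖z‖ ^ 2 := by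
  rw [mul_comm, Complex.mul_conj, Complex.ofReal_re, ← Complex.sq_norm]

/-- Conjugation invariance of the characteristic polynomial. -/
lemma charpoly_conj {R : Type*} [CommRing R] (P A Q : Matrix (Fin k) (Fin k) R)
    (hPQ : P * Q = 1) : (P * A * Q).charpoly = A.charpoly := by
  have hPQ' : P.map C * Q.map C = 1 := by
    rw [← Matrix.map_mul, hPQ]
    ext i j
    simp [Matrix.map_apply, Matrix.one_apply, apply_ite (C : R → R[X])]
  have hsc : Matrix.scalar (Fin k) (X : R[X])
      = (X : R[X]) • (1 : Matrix (Fin k) (Fin k) R[X]) := by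
    ext i j
    rcases eq_or_ne i j with rfl | h
    · simp
    · simp [Matrix.scalar_apply, Matrix.diagonal_apply_ne _ h, Matrix.one_apply_ne h]
  have key : charmatrix (P * A * Q) = P.map C * charmatrix A * Q.map C := by
    unfold charmatrix
    simp only [RingHom.mapMatrix_apply]
    rw [Matrix.mul_sub, Matrix.sub_mul]
    congr 1
    · rw [hsc, mul_smul_comm, smul_mul_assoc, Matrix.mul_one, hPQ']
    · rw [← Matrix.map_mul, ← Matrix.map_mul]
  rw [Matrix.charpoly, Matrix.charpoly, key, Matrix.det_mul, Matrix.det_mul]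
  have h1 : (P.map C).det * (Q.map C).det = 1 := by
    rw [← Matrix.det_mul, hPQ', Matrix.det_one]
  calc (P.map (C : R →+* R[X])).det * (charmatrix A).det * (Q.map (C : R →+* R[X])).det
      = (charmatrix A).det * ((P.map (C : R →+* R[X])).det * (Q.map (C : R →+* R[X])).det) := by
        ring
    _ = (charmatrix A).det := by rw [h1, mul_one]

lemma charpoly_diagonal (d : Fin k → ℂ) :
    (Matrix.diagonal d).charpoly = ∏ i, (X - C (d i)) := by
  have h : charmatrix (Matrix.diagonal d)
      = Matrix.diagonal (fun i => (X : ℂ[X]) - C (d i)) := by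
    ext i j
    rcases eq_or_ne i j with rfl | h
    · simp
    · rw [charmatrix_apply_ne _ _ _ h, Matrix.diagonal_apply_ne _ h,
        Matrix.diagonal_apply_ne _ h]
      simp
  rw [Matrix.charpoly, h, Matrix.det_diagonal]

/-- `charpoly (A * B) = charpoly (B * A)` for square complex matrices. -/
lemma charpoly_mul_comm (A B : Matrix (Fin k) (Fin k) ℂ) :
    (A * B).charpoly = (B * A).charpoly := by
  classical
  let φ : Polynomial ℂ →+* RatFunc ℂ := algebraMap (Polynomial ℂ) (RatFunc ℂ)
  have hφ : Function.Injective φ := IsFractionRing.injective (Polynomial ℂ) (RatFunc ℂ)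
  set At : Matrix (Fin k) (Fin k) (Polynomial ℂ) := - charmatrix A with hAt
  have hdet : At.det ≠ 0 := by
    rw [hAt, Matrix.det_neg]
    have h1 : (charmatrix A).det = A.charpoly := rfl
    rw [h1]
    exact mul_ne_zero (pow_ne_zero _ (neg_ne_zero.mpr one_ne_zero))
      (A.charpoly_monic.ne_zero)
  set D : Matrix (Fin k) (Fin k) (RatFunc ℂ) := At.map φ with hD
  have hDdet : IsUnit D.det := by
    have : D.det = φ At.det := (RingHom.map_det φ At).symm
    rw [this]
    exact isUnit_iff_ne_zero.mpr (fun h => hdet (by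
      have : φ At.det = φ 0 := by simpa using h
      exact hφ this))
  have hD1 : D * D⁻¹ = 1 := Matrix.mul_nonsing_inv D hDdet
  set Bk : Matrix (Fin k) (Fin k) (RatFunc ℂ) := (B.map C).map φ with hBk
  have step1 : (D * Bk).charpoly = (Bk * D).charpoly := by
    have h2 : D * Bk = D * (Bk * D) * D⁻¹ := by
      rw [Matrix.mul_assoc, Matrix.mul_assoc, hD1, Matrix.mul_one]
    rw [h2, charpoly_conj _ _ _ hD1]
  have step3 : (At * B.map C).charpoly = (B.map C * At).charpoly := by
    have h3 : ((At * B.map C).map φ).charpoly = ((B.map C * At).map φ).charpoly := by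
      rw [Matrix.map_mul, Matrix.map_mul]
      exact step1
    rw [Matrix.charpoly_map, Matrix.charpoly_map] at h3
    exact Polynomial.map_injective φ hφ h3
  let ev : Polynomial ℂ →+* ℂ := Polynomial.evalRingHom 0
  have hAtev : At.map ev = A := by
    ext i j
    rcases eq_or_ne i j with rfl | h
    · simp [hAt, Matrix.map_apply, charmatrix_apply_eq, ev, coe_evalRingHom]
    · rw [Matrix.map_apply, hAt, Matrix.neg_apply, charmatrix_apply_ne _ _ _ h]
      simp [ev, coe_evalRingHom]
  have hBev : (B.map C).map ev = B := by
    ext i j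
    simp [ev, coe_evalRingHom, Matrix.map_apply]
  have h4 := congrArg (Polynomial.map ev) step3
  rw [← Matrix.charpoly_map (At * B.map C) ev, ← Matrix.charpoly_map (B.map C * At) ev,
    Matrix.map_mul, Matrix.map_mul, hAtev, hBev] at h4
  exact h4

lemma charpoly_hermitian (B : Matrix (Fin k) (Fin k) ℂ) (hB : B.IsHermitian) :
    B.charpoly = ∏ i, (X - C ((hB.eigenvalues i : ℂ))) := by
  conv_lhs => rw [hB.spectral_theorem]
  rw [Unitary.conjStarAlgAut_apply, charpoly_conj _ _ _ (Matrix.mem_unitaryGroup_iff.mp (hB.eigenvectorUnitary).2),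
    charpoly_diagonal]
  rfl

lemma multiset_eq_of_prod_eq (a b : Fin k → ℂ)
    (h : ∏ i, (X - C (a i)) = ∏ i, (X - C (b i))) :
    Multiset.map a Finset.univ.val = Multiset.map b Finset.univ.val := by
  have key : ∀ f : Fin k → ℂ, (∏ i, (X - C (f i))).roots = Multiset.map f Finset.univ.val := by
    intro f
    have h1 : ∏ i, (X - C (f i))
        = ((Multiset.map f Finset.univ.val).map (fun r => X - C r)).prod := by
      rw [Multiset.map_map]
      rfl
    rw [h1, Polynomial.roots_multiset_prod_X_sub_C]
  rw [← key a, ← key b, h]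

lemma monotone_eq_of_multiset_eq (f g : Fin k → ℝ) (hf : Monotone f) (hg : Monotone g)
    (h : Multiset.map f Finset.univ.val = Multiset.map g Finset.univ.val) : f = g := by
  have h' : ((List.ofFn f : List ℝ) : Multiset ℝ) = (List.ofFn g : List ℝ) := by
    rwa [← Fin.univ_val_map, ← Fin.univ_val_map]
  exact List.ofFn_injective
    (List.Perm.eq_of_sortedLE hf.sortedLE_ofFn hg.sortedLE_ofFn (Multiset.coe_eq_coe.mp h'))

lemma eig_sorted {B : Matrix (Fin k) (Fin k) ℂ} (hB : B.IsHermitian)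
    {σ : Fin k → ℝ} (hσ0 : ∀ i, 0 ≤ σ i) (hσm : Monotone σ)
    (hchar : B.charpoly = ∏ i : Fin k, (X - C ((σ i : ℂ) ^ 2))) :
    ∀ i, σ i ^ 2 = (hB.eigenvalues ∘ Tuple.sort hB.eigenvalues) i := by
  have h1 : ∏ i : Fin k, (X - C (((σ i ^ 2 : ℝ) : ℂ)))
      = ∏ i : Fin k, (X - C ((hB.eigenvalues i : ℂ))) := by
    rw [← charpoly_hermitian B hB, hchar]
    congr 1
    funext i
    push_cast
    ring_nf
  have h2 := multiset_eq_of_prod_eq _ _ h1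
  have h3 : Multiset.map (fun i => σ i ^ 2) Finset.univ.val
      = Multiset.map hB.eigenvalues Finset.univ.val := by
    apply Multiset.map_injective (f := (Complex.ofReal : ℝ → ℂ)) Complex.ofReal_injective
    rw [Multiset.map_map, Multiset.map_map]
    exact h2
  have h4 : Multiset.map hB.eigenvalues Finset.univ.val
      = Multiset.map (hB.eigenvalues ∘ Tuple.sort hB.eigenvalues) Finset.univ.val := by
    conv_lhs => rw [← Finset.map_univ_equiv (Tuple.sort hB.eigenvalues)]
    rw [Finset.map_val, Multiset.map_map]
    rfl
  have h5 := monotone_eq_of_multiset_eq _ _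
    (fun a b hab => pow_le_pow_left₀ (hσ0 a) (hσm hab) 2)
    (Tuple.monotone_sort _) (h3.trans h4)
  exact fun i => congrFun h5 i

/-- Expansion of the quadratic form of a Hermitian matrix in its eigenbasis. -/
lemma quad_expand {B : Matrix (Fin k) (Fin k) ℂ} (hB : B.IsHermitian)
    (x : EuclideanSpace ℂ (Fin k)) :
    (star (x : Fin k → ℂ) ⬝ᵥ (B *ᵥ (x : Fin k → ℂ))).re
      = ∑ j, hB.eigenvalues j * ‖hB.eigenvectorBasis.repr x j‖ ^ 2 := by
  classical
  set b := hB.eigenvectorBasis with hb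
  set c : Fin k → ℂ := fun j => b.repr x j with hc
  set w : Fin k → (Fin k → ℂ) := fun j => (b j : Fin k → ℂ) with hw
  have hx : (x : Fin k → ℂ) = ∑ j, c j • w j := by
    simpa [c, w, WithLp.ofLp_sum, WithLp.ofLp_smul] using congrArg WithLp.ofLp (b.sum_repr x).symm
  have hcw : ∀ j, c j = star (w j) ⬝ᵥ (x : Fin k → ℂ) := by
    intro j
    have h := b.repr_apply_apply x j
    rw [EuclideanSpace.inner_eq_star_dotProduct, dotProduct_comm] at h
    exact h
  have hmul : B *ᵥ (x : Fin k → ℂ) = ∑ j, (c j * (hB.eigenvalues j : ℂ)) • w j := by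
    conv_lhs => rw [hx]
    rw [show (B *ᵥ ∑ j : Fin k, c j • w j) = B.mulVecLin (∑ j : Fin k, c j • w j) from rfl,
      map_sum]
    refine Finset.sum_congr rfl fun j _ => ?_
    rw [_root_.map_smul]
    have hBw : B.mulVecLin (w j) = (hB.eigenvalues j : ℝ) • w j := hB.mulVec_eigenvectorBasis j
    rw [hBw]
    funext l
    simp only [Pi.smul_apply, smul_eq_mul, Complex.real_smul]
    ring
  have hdot : star (x : Fin k → ℂ) ⬝ᵥ (B *ᵥ (x : Fin k → ℂ))
      = ∑ j, (c j * (hB.eigenvalues j : ℂ)) * (starRingEnd ℂ) (c j) := by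
    have hds : ∀ (u : Fin k → ℂ) (f : Fin k → Fin k → ℂ),
        u ⬝ᵥ (∑ j, f j) = ∑ j, u ⬝ᵥ f j := by
      intro u f
      simp only [dotProduct, Finset.sum_apply, Finset.mul_sum]
      exact Finset.sum_comm
    rw [hmul, hds]
    refine Finset.sum_congr rfl fun j _ => ?_
    rw [dotProduct_smul]
    have h1 : star (x : Fin k → ℂ) ⬝ᵥ w j = (starRingEnd ℂ) (c j) := by
      rw [hcw j]
      simp only [dotProduct, map_sum, _root_.map_mul, Pi.star_apply, Complex.star_def,
        Complex.conj_conj]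
      exact Finset.sum_congr rfl fun l _ => mul_comm _ _
    rw [h1]
    rfl
  rw [hdot, Complex.re_sum]
  refine Finset.sum_congr rfl fun j _ => ?_
  have h2 : (c j * (hB.eigenvalues j : ℂ)) * (starRingEnd ℂ) (c j)
      = (hB.eigenvalues j : ℂ) * ((Complex.normSq (c j) : ℝ) : ℂ) := by
    rw [← Complex.mul_conj]
    ring
  rw [h2, ← Complex.ofReal_mul, Complex.ofReal_re, ← Complex.sq_norm]

lemma parseval (b : OrthonormalBasis (Fin k) ℂ (EuclideanSpace ℂ (Fin k)))
    (x : EuclideanSpace ℂ (Fin k)) :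
    ∑ j, ‖b.repr x j‖ ^ 2 = ∑ j, ‖(x : Fin k → ℂ) j‖ ^ 2 := by
  have h1 : ‖b.repr x‖ = ‖x‖ := b.repr.norm_map x
  have h2 := EuclideanSpace.norm_eq (b.repr x)
  have h3 := EuclideanSpace.norm_eq x
  have h4 : Real.sqrt (∑ j, ‖b.repr x j‖ ^ 2) = Real.sqrt (∑ j, ‖(x : Fin k → ℂ) j‖ ^ 2) := by
    rw [← h2, ← h3, h1]
  have h5 : (0:ℝ) ≤ ∑ j, ‖b.repr x j‖ ^ 2 := Finset.sum_nonneg fun _ _ => sq_nonneg _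
  have h6 : (0:ℝ) ≤ ∑ j, ‖(x : Fin k → ℂ) j‖ ^ 2 := Finset.sum_nonneg fun _ _ => sq_nonneg _
  calc ∑ j, ‖b.repr x j‖ ^ 2 = Real.sqrt (∑ j, ‖b.repr x j‖ ^ 2) ^ 2 := (Real.sq_sqrt h5).symm
    _ = Real.sqrt (∑ j, ‖(x : Fin k → ℂ) j‖ ^ 2) ^ 2 := by rw [h4]
    _ = ∑ j, ‖(x : Fin k → ℂ) j‖ ^ 2 := Real.sq_sqrt h6

lemma repr_vanish (b : OrthonormalBasis (Fin k) ℂ (EuclideanSpace ℂ (Fin k)))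
    (s : Finset (Fin k)) (x : EuclideanSpace ℂ (Fin k))
    (hx : x ∈ Submodule.span ℂ (⇑b '' (s : Set (Fin k))))
    (i : Fin k) (hi : i ∉ s) : b.repr x i = 0 := by
  induction hx using Submodule.span_induction with
  | mem y hy =>
    obtain ⟨j, hj, rfl⟩ := hy
    rw [b.repr_self]
    rw [EuclideanSpace.single_apply]
    simp only [ite_eq_right_iff]
    intro h
    exact absurd (h ▸ hj) hi
  | zero => simp
  | add y z _ _ hy hz => rw [map_add]; simp [hy, hz]
  | smul a y _ hy => rw [_root_.map_smul]; simp [PiLp.smul_apply, hy]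

lemma quad_le_of_mem {B : Matrix (Fin k) (Fin k) ℂ} (hB : B.IsHermitian)
    (s : Finset (Fin k)) (t : ℝ) (ht : ∀ j ∈ s, hB.eigenvalues j ≤ t)
    (x : EuclideanSpace ℂ (Fin k))
    (hx : x ∈ Submodule.span ℂ (⇑hB.eigenvectorBasis '' (s : Set (Fin k)))) :
    (star (x : Fin k → ℂ) ⬝ᵥ (B *ᵥ (x : Fin k → ℂ))).re
      ≤ t * ∑ j, ‖(x : Fin k → ℂ) j‖ ^ 2 := by
  rw [quad_expand hB x]
  have hvanish : ∀ j ∉ s, hB.eigenvectorBasis.repr x j = 0 :=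
    fun j hj => repr_vanish _ s x hx j hj
  have h1 : ∑ j, hB.eigenvalues j * ‖hB.eigenvectorBasis.repr x j‖ ^ 2
      = ∑ j ∈ s, hB.eigenvalues j * ‖hB.eigenvectorBasis.repr x j‖ ^ 2 :=
    (Finset.sum_subset (Finset.subset_univ s)
      (fun j _ hj => by rw [hvanish j hj]; simp)).symm
  have h2 : ∑ j, t * ‖hB.eigenvectorBasis.repr x j‖ ^ 2
      = ∑ j ∈ s, t * ‖hB.eigenvectorBasis.repr x j‖ ^ 2 :=
    (Finset.sum_subset (Finset.subset_univ s)
      (fun j _ hj => by rw [hvanish j hj]; simp)).symm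
  have h3 : ∑ j ∈ s, hB.eigenvalues j * ‖hB.eigenvectorBasis.repr x j‖ ^ 2
      ≤ ∑ j ∈ s, t * ‖hB.eigenvectorBasis.repr x j‖ ^ 2 :=
    Finset.sum_le_sum fun j hj =>
      mul_le_mul_of_nonneg_right (ht j hj) (sq_nonneg _)
  calc ∑ j, hB.eigenvalues j * ‖hB.eigenvectorBasis.repr x j‖ ^ 2
      ≤ ∑ j, t * ‖hB.eigenvectorBasis.repr x j‖ ^ 2 := by rw [h1, h2]; exact h3
    _ = t * ∑ j, ‖hB.eigenvectorBasis.repr x j‖ ^ 2 := by rw [Finset.mul_sum]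
    _ = t * ∑ j, ‖(x : Fin k → ℂ) j‖ ^ 2 := by rw [parseval]

lemma quad_ge_of_mem {B : Matrix (Fin k) (Fin k) ℂ} (hB : B.IsHermitian)
    (s : Finset (Fin k)) (t : ℝ) (ht : ∀ j ∈ s, t ≤ hB.eigenvalues j)
    (x : EuclideanSpace ℂ (Fin k))
    (hx : x ∈ Submodule.span ℂ (⇑hB.eigenvectorBasis '' (s : Set (Fin k)))) :
    t * ∑ j, ‖(x : Fin k → ℂ) j‖ ^ 2
      ≤ (star (x : Fin k → ℂ) ⬝ᵥ (B *ᵥ (x : Fin k → ℂ))).re := by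
  rw [quad_expand hB x]
  have hvanish : ∀ j ∉ s, hB.eigenvectorBasis.repr x j = 0 :=
    fun j hj => repr_vanish _ s x hx j hj
  have h1 : ∑ j, hB.eigenvalues j * ‖hB.eigenvectorBasis.repr x j‖ ^ 2
      = ∑ j ∈ s, hB.eigenvalues j * ‖hB.eigenvectorBasis.repr x j‖ ^ 2 :=
    (Finset.sum_subset (Finset.subset_univ s)
      (fun j _ hj => by rw [hvanish j hj]; simp)).symm
  have h2 : ∑ j, t * ‖hB.eigenvectorBasis.repr x j‖ ^ 2
      = ∑ j ∈ s, t * ‖hB.eigenvectorBasis.repr x j‖ ^ 2 :=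
    (Finset.sum_subset (Finset.subset_univ s)
      (fun j _ hj => by rw [hvanish j hj]; simp)).symm
  have h3 : ∑ j ∈ s, t * ‖hB.eigenvectorBasis.repr x j‖ ^ 2
      ≤ ∑ j ∈ s, hB.eigenvalues j * ‖hB.eigenvectorBasis.repr x j‖ ^ 2 :=
    Finset.sum_le_sum fun j hj =>
      mul_le_mul_of_nonneg_right (ht j hj) (sq_nonneg _)
  calc t * ∑ j, ‖(x : Fin k → ℂ) j‖ ^ 2
      = t * ∑ j, ‖hB.eigenvectorBasis.repr x j‖ ^ 2 := by rw [parseval]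
    _ = ∑ j, t * ‖hB.eigenvectorBasis.repr x j‖ ^ 2 := by rw [Finset.mul_sum]
    _ ≤ ∑ j, hB.eigenvalues j * ‖hB.eigenvectorBasis.repr x j‖ ^ 2 := by
        rw [h1, h2]; exact h3

lemma finrank_span_basis (b : OrthonormalBasis (Fin k) ℂ (EuclideanSpace ℂ (Fin k)))
    (s : Finset (Fin k)) :
    Module.finrank ℂ (Submodule.span ℂ (⇑b '' (s : Set (Fin k)))) = s.card := by
  have hon : Orthonormal ℂ (fun j : (s : Set (Fin k)) => b j) :=
    b.orthonormal.comp _ Subtype.val_injective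
  have hli := hon.linearIndependent
  have himg : (⇑b '' (s : Set (Fin k))) = Set.range (fun j : (s : Set (Fin k)) => b j) :=
    Set.image_eq_range _ _
  rw [himg, finrank_span_eq_card hli]
  simp

/-- The quadratic form identity `re (v† (X Xᴴ) v) = ∑ ‖Xᴴ v‖²`. -/
lemma quad_gram {a b : ℕ} (X : Matrix (Fin a) (Fin b) ℂ) (v : Fin a → ℂ) :
    (star v ⬝ᵥ ((X * Xᴴ) *ᵥ v)).re = ∑ kk, ‖(Xᴴ *ᵥ v) kk‖ ^ 2 := by
  rw [← Matrix.mulVec_mulVec, Matrix.dotProduct_mulVec]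
  have h1 : star v ᵥ* X = star (Xᴴ *ᵥ v) := by
    rw [Matrix.star_mulVec, Matrix.conjTranspose_conjTranspose]
  rw [h1]
  rw [show star (Xᴴ *ᵥ v) ⬝ᵥ (Xᴴ *ᵥ v)
      = ∑ kk, (starRingEnd ℂ) ((Xᴴ *ᵥ v) kk) * (Xᴴ *ᵥ v) kk from rfl]
  rw [Complex.re_sum]
  exact Finset.sum_congr rfl fun kk _ => conj_mul_re _

lemma transfer {n p : ℕ} {r : Fin p → Fin n} (hr : Function.Injective r)
    (g : Fin n → ℂ) (y : Fin p → ℂ) :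
    ∑ l, g l * (∑ i', if l = r i' then y i' else 0) = ∑ i', g (r i') * y i' := by
  classical
  have h1 : ∀ l, g l * (∑ i', if l = r i' then y i' else 0)
      = ∑ i', if l = r i' then g l * y i' else 0 := by
    intro l
    rw [Finset.mul_sum]
    exact Finset.sum_congr rfl fun i' _ => by split_ifs <;> simp
  simp only [h1]
  rw [Finset.sum_comm]
  refine Finset.sum_congr rfl fun i' _ => ?_
  have h2 : ∀ l, (if l = r i' then g l * y i' else 0)
      = if l = r i' then g (r i') * y i' else 0 := by
    intro l
    split_ifs with h
    · rw [h]
    · rfl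
  simp only [h2]
  rw [Finset.sum_ite_eq' Finset.univ (r i') (fun _ => g (r i') * y i')]
  simp

end SVIAux

open SVIAux Polynomial in
/-- Each singular value of a `p × q` submatrix of `M` is bounded by the corresponding
singular value of `M`: `σ i ≤ m (n - p + i)`. -/
theorem submatrix_singular_values_le {n p q : ℕ} (hpq : p ≤ q) (hqn : q ≤ n)
    (M : Matrix (Fin n) (Fin n) ℂ) (m : Fin n → ℝ) (hm : IsSingularValues M m)
    (r : Fin p → Fin n) (c : Fin q → Fin n) (hr : StrictMono r) (hc : StrictMono c)
    (σ : Fin p → ℝ) (hσ : IsSingularValuesRect (M.submatrix r c) σ) :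
    ∀ i : Fin p, σ i ≤ m ⟨n - p + (i : ℕ), by omega⟩ := by
  classical
  obtain ⟨hm0, hmmono, hmchar⟩ := hm
  obtain ⟨hσ0, hσmono, hσchar⟩ := hσ
  intro i
  set j₀ : Fin n := ⟨n - p + (i : ℕ), by omega⟩ with hj₀
  set N : Matrix (Fin p) (Fin q) ℂ := M.submatrix r c with hNdef
  have hA : (M * Mᴴ).IsHermitian := Matrix.isHermitian_mul_conjTranspose_self M
  have hB : (N * Nᴴ).IsHermitian := Matrix.isHermitian_mul_conjTranspose_self N
  have hAchar : (M * Mᴴ).charpoly = ∏ j : Fin n, (X - C ((m j : ℂ) ^ 2)) := by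
    rw [SVIAux.charpoly_mul_comm M Mᴴ]
    exact hmchar
  have hmsq := eig_sorted hA hm0 hmmono hAchar
  have hσsq := eig_sorted hB hσ0 hσmono hσchar
  set sA := Tuple.sort hA.eigenvalues with hsA
  set sB := Tuple.sort hB.eigenvalues with hsB
  suffices hkey : (hB.eigenvalues ∘ sB) i ≤ (hA.eigenvalues ∘ sA) j₀ by
    have h1 : σ i ^ 2 ≤ m j₀ ^ 2 := by rw [hmsq, hσsq]; exact hkey
    calc σ i = Real.sqrt (σ i ^ 2) := (Real.sqrt_sq (hσ0 i)).symm
      _ ≤ Real.sqrt (m j₀ ^ 2) := Real.sqrt_le_sqrt h1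
      _ = m j₀ := Real.sqrt_sq (hm0 j₀)
  -- the selection matrix and its linear map
  set S : Matrix (Fin n) (Fin p) ℂ := Matrix.of (fun j i' => if j = r i' then 1 else 0)
    with hS
  have hSapply : ∀ (y : Fin p → ℂ) (l : Fin n),
      (S *ᵥ y) l = ∑ i', if l = r i' then y i' else 0 := by
    intro y l
    simp only [Matrix.mulVec, dotProduct, hS, Matrix.of_apply]
    exact Finset.sum_congr rfl fun i' _ => by split_ifs <;> simp
  have htrans : ∀ (g : Fin n → ℂ) (y : Fin p → ℂ),
      ∑ l, g l * (S *ᵥ y) l = ∑ i', g (r i') * y i' := by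
    intro g y
    simp only [hSapply]
    exact transfer hr.injective g y
  have hSr : ∀ (y : Fin p → ℂ) (i' : Fin p), (S *ᵥ y) (r i') = y i' := by
    intro y i'
    rw [hSapply]
    simp only [hr.injective.eq_iff]
    rw [Finset.sum_ite_eq Finset.univ i' y]
    simp
  set L : EuclideanSpace ℂ (Fin p) →ₗ[ℂ] EuclideanSpace ℂ (Fin n) :=
    Matrix.toEuclideanLin S with hL
  have hLapply : ∀ y : EuclideanSpace ℂ (Fin p), (L y : Fin n → ℂ) = S *ᵥ (y : Fin p → ℂ) :=
    fun y => rfl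
  have hinj : Function.Injective L := by
    intro y1 y2 h12
    have h13 : ∀ i', (S *ᵥ (y1 : Fin p → ℂ)) i' = (S *ᵥ (y2 : Fin p → ℂ)) i' := by
      intro i'
      rw [← hLapply, ← hLapply, h12]
    apply PiLp.ext
    intro i'
    rw [← hSr (y1 : Fin p → ℂ) i', ← hSr (y2 : Fin p → ℂ) i']
    exact h13 (r i')
  -- norm preservation
  have hnorm : ∀ y : Fin p → ℂ, ∑ l, ‖(S *ᵥ y) l‖ ^ 2 = ∑ i', ‖y i'‖ ^ 2 := by
    intro y
    have h1 : ∑ l, (starRingEnd ℂ) ((S *ᵥ y) l) * (S *ᵥ y) l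
        = ∑ i', (starRingEnd ℂ) (y i') * y i' := by
      have := htrans (fun l => (starRingEnd ℂ) ((S *ᵥ y) l)) y
      rw [this]
      exact Finset.sum_congr rfl fun i' _ => by rw [hSr]
    have h2 := congrArg Complex.re h1
    rw [Complex.re_sum, Complex.re_sum] at h2
    calc ∑ l, ‖(S *ᵥ y) l‖ ^ 2
        = ∑ l, ((starRingEnd ℂ) ((S *ᵥ y) l) * (S *ᵥ y) l).re := by
          exact (Finset.sum_congr rfl fun l _ => (conj_mul_re _).symm)
      _ = ∑ i', ((starRingEnd ℂ) (y i') * y i').re := h2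
      _ = ∑ i', ‖y i'‖ ^ 2 := by
          exact Finset.sum_congr rfl fun i' _ => conj_mul_re _
  -- quadratic form comparison
  have hcompare : ∀ y : Fin p → ℂ,
      (star y ⬝ᵥ ((N * Nᴴ) *ᵥ y)).re
        ≤ (star (S *ᵥ y) ⬝ᵥ ((M * Mᴴ) *ᵥ (S *ᵥ y))).re := by
    intro y
    rw [quad_gram N y, quad_gram M (S *ᵥ y)]
    have hcoord : ∀ kk : Fin q, (Nᴴ *ᵥ y) kk = (Mᴴ *ᵥ (S *ᵥ y)) (c kk) := by
      intro kk
      have h1 : (Mᴴ *ᵥ (S *ᵥ y)) (c kk) = ∑ l, (starRingEnd ℂ) (M l (c kk)) * (S *ᵥ y) l := by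
        simp [Matrix.mulVec, dotProduct, Matrix.conjTranspose_apply]
      rw [h1, htrans (fun l => (starRingEnd ℂ) (M l (c kk))) y]
      simp [Matrix.mulVec, dotProduct, Matrix.conjTranspose_apply, hNdef]
    have h2 : ∑ kk : Fin q, ‖(Nᴴ *ᵥ y) kk‖ ^ 2
        = ∑ kk : Fin q, ‖(Mᴴ *ᵥ (S *ᵥ y)) (c kk)‖ ^ 2 := by
      exact Finset.sum_congr rfl fun kk _ => by rw [hcoord]
    rw [h2]
    rw [show (∑ kk : Fin q, ‖(Mᴴ *ᵥ (S *ᵥ y)) (c kk)‖ ^ 2)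
        = ∑ jj ∈ Finset.image c Finset.univ, ‖(Mᴴ *ᵥ (S *ᵥ y)) jj‖ ^ 2 from
      (Finset.sum_image (f := fun jj => ‖(Mᴴ *ᵥ (S *ᵥ y)) jj‖ ^ 2) (g := c)
        (fun _ _ _ _ h => hc.injective h)).symm]
    exact Finset.sum_le_sum_of_subset_of_nonneg (Finset.subset_univ _)
      (fun _ _ _ => sq_nonneg _)
  -- subspaces
  set wB : Fin p → EuclideanSpace ℂ (Fin p) := ⇑hB.eigenvectorBasis with hwB
  set wA : Fin n → EuclideanSpace ℂ (Fin n) := ⇑hA.eigenvectorBasis with hwA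
  set sW : Finset (Fin p) := Finset.image sB (Finset.Ici i) with hsW
  set sU : Finset (Fin n) := Finset.image sA (Finset.Iic j₀) with hsU
  set W' : Submodule ℂ (EuclideanSpace ℂ (Fin p)) :=
    Submodule.span ℂ (wB '' (sW : Set (Fin p))) with hW'
  set U : Submodule ℂ (EuclideanSpace ℂ (Fin n)) :=
    Submodule.span ℂ (wA '' (sU : Set (Fin n))) with hU
  set W : Submodule ℂ (EuclideanSpace ℂ (Fin n)) := W'.map L with hW
  have hcardW : sW.card = p - (i : ℕ) := by
    rw [hsW, Finset.card_image_of_injective _ sB.injective, Fin.card_Ici]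
  have hcardU : sU.card = n - p + (i : ℕ) + 1 := by
    rw [hsU, Finset.card_image_of_injective _ sA.injective, Fin.card_Iic]
  have hrankW' : Module.finrank ℂ W' = p - (i : ℕ) := by
    rw [hW', finrank_span_basis hB.eigenvectorBasis sW, hcardW]
  have hrankW : Module.finrank ℂ W = p - (i : ℕ) := by
    rw [hW, ← hrankW']
    exact (LinearEquiv.finrank_eq (Submodule.equivMapOfInjective L hinj W')).symm
  have hrankU : Module.finrank ℂ U = n - p + (i : ℕ) + 1 := by
    rw [hU, finrank_span_basis hA.eigenvectorBasis sU, hcardU]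
  -- intersection
  have hsum := Submodule.finrank_sup_add_finrank_inf_eq U W
  have hle : Module.finrank ℂ ↥(U ⊔ W) ≤ n := by
    have := Submodule.finrank_le (U ⊔ W)
    rwa [finrank_euclideanSpace_fin] at this
  have hpos : 0 < Module.finrank ℂ ↥(U ⊓ W) := by
    have hip : (i : ℕ) < p := i.isLt
    omega
  have : Nontrivial ↥(U ⊓ W) := Module.finrank_pos_iff.mp hpos
  obtain ⟨xx, hxx0⟩ := exists_ne (0 : ↥(U ⊓ W))
  set x : EuclideanSpace ℂ (Fin n) := (xx : EuclideanSpace ℂ (Fin n)) with hxdef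
  have hxne : x ≠ 0 := fun h => hxx0 (Subtype.ext h)
  have hxU : x ∈ U := xx.2.1
  have hxW : x ∈ W := xx.2.2
  obtain ⟨y, hyW', hyx⟩ := hxW
  have hyne : y ≠ 0 := by
    intro h
    apply hxne
    rw [← hyx, h, map_zero]
  have hxy : (x : Fin n → ℂ) = S *ᵥ (y : Fin p → ℂ) := by
    rw [← hyx]
    exact hLapply y
  -- positivity of ∑ ‖y i'‖²
  have hypos : 0 < ∑ i', ‖(y : Fin p → ℂ) i'‖ ^ 2 := by
    have h1 : ∃ i', (y : Fin p → ℂ) i' ≠ 0 := by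
      by_contra h
      push_neg at h
      exact hyne (WithLp.ofLp_injective 2 (funext h))
    obtain ⟨i', hi'⟩ := h1
    exact Finset.sum_pos' (fun _ _ => sq_nonneg _)
      ⟨i', Finset.mem_univ i', pow_pos (norm_pos_iff.mpr hi') 2⟩
  -- bounds
  have hWbound : ∀ j ∈ sW, (hB.eigenvalues ∘ sB) i ≤ hB.eigenvalues j := by
    intro j hj
    rw [hsW] at hj
    obtain ⟨j', hj', rfl⟩ := Finset.mem_image.mp hj
    exact Tuple.monotone_sort hB.eigenvalues (Finset.mem_Ici.mp hj')
  have hUbound : ∀ j ∈ sU, hA.eigenvalues j ≤ (hA.eigenvalues ∘ sA) j₀ := by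
    intro j hj
    rw [hsU] at hj
    obtain ⟨j', hj', rfl⟩ := Finset.mem_image.mp hj
    exact Tuple.monotone_sort hA.eigenvalues (Finset.mem_Iic.mp hj')
  have b1 := quad_ge_of_mem hB sW ((hB.eigenvalues ∘ sB) i) hWbound y hyW'
  have b3 := quad_le_of_mem hA sU ((hA.eigenvalues ∘ sA) j₀) hUbound x hxU
  have b2 := hcompare (y : Fin p → ℂ)
  have b4 : ∑ l, ‖(x : Fin n → ℂ) l‖ ^ 2 = ∑ i', ‖(y : Fin p → ℂ) i'‖ ^ 2 := by
    rw [show (x : Fin n → ℂ) = S *ᵥ (y : Fin p → ℂ) from hxy]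
    exact hnorm _
  have chain : (hB.eigenvalues ∘ sB) i * ∑ i', ‖(y : Fin p → ℂ) i'‖ ^ 2
      ≤ (hA.eigenvalues ∘ sA) j₀ * ∑ i', ‖(y : Fin p → ℂ) i'‖ ^ 2 := by
    calc (hB.eigenvalues ∘ sB) i * ∑ i', ‖(y : Fin p → ℂ) i'‖ ^ 2
        ≤ (star (y : Fin p → ℂ) ⬝ᵥ ((N * Nᴴ) *ᵥ (y : Fin p → ℂ))).re := b1
      _ ≤ (star (S *ᵥ (y : Fin p → ℂ)) ⬝ᵥ ((M * Mᴴ) *ᵥ (S *ᵥ (y : Fin p → ℂ)))).re := b2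
      _ = (star (x : Fin n → ℂ) ⬝ᵥ ((M * Mᴴ) *ᵥ (x : Fin n → ℂ))).re := by rw [hxy]
      _ ≤ (hA.eigenvalues ∘ sA) j₀ * ∑ l, ‖(x : Fin n → ℂ) l‖ ^ 2 := b3
      _ = (hA.eigenvalues ∘ sA) j₀ * ∑ i', ‖(y : Fin p → ℂ) i'‖ ^ 2 := by rw [b4]
  exact le_of_mul_le_mul_right chain hypos
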